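/- arXiv:1303.3810 — 10 statements merged into one kernel-verified Lean document; each statement's English description precedes it below -/
import Mathlib

section
/- Define T = (ℕ × ℕ) ∪ {x, y} (with x, y two distinct points not in ℕ × ℕ) with topology τ generated by the base consisting of: (i) singletons {(m,n)} for (m,n) ∈ ℕ × ℕ, (ii) sets T \ A where A ⊆ (ℕ × ℕ) ∪ {y} contains y and A meets each row {(m,n) : n ∈ ℕ} in a finite set, and (iii) sets T \ B where B ⊆ (ℕ × ℕ) ∪ {x} contains x and B ∩ (ℕ × ℕ) is contained in finitely many rows. Then (T, τ) is a compact topological space. -/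
/-- The underlying set `T = (ℕ × ℕ) ∪ {x, y}`: lattice points are `Sum.inl`,
`x = Sum.inr true`, `y = Sum.inr false`. -/
abbrev ArensT := (ℕ × ℕ) ⊕ Bool

/-- The base for the topology on `T`: (i) singletons of lattice points, (ii) complements
`T \ A` where `A ⊆ (ℕ × ℕ) ∪ {y}` contains `y` and meets each row finitely, and
(iii) complements `T \ B` where `B ⊆ (ℕ × ℕ) ∪ {x}` contains `x` and meets only
finitely many rows. -/
def arensBase : Set (Set ArensT) :=
  {s | (∃ p : ℕ × ℕ, s = {Sum.inl p}) ∨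
    (∃ A : Set ArensT, s = Aᶜ ∧ Sum.inr false ∈ A ∧ Sum.inr true ∉ A ∧
      ∀ m : ℕ, {n : ℕ | Sum.inl (m, n) ∈ A}.Finite) ∨
    (∃ B : Set ArensT, s = Bᶜ ∧ Sum.inr true ∈ B ∧ Sum.inr false ∉ B ∧
      ∃ M : ℕ, ∀ m n : ℕ, Sum.inl (m, n) ∈ B → m ≤ M)}

/-- The topology `τ` generated by this base. -/
def arensTop : TopologicalSpace ArensT := TopologicalSpace.generateFrom arensBase

lemma arens_rowfin {U : Set ArensT} (h : TopologicalSpace.GenerateOpen arensBase U)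
    (hx : Sum.inr true ∈ U) : ∀ m : ℕ, {n : ℕ | Sum.inl (m, n) ∉ U}.Finite := by
  induction h with
  | basic s hs =>
      rcases hs with ⟨p, rfl⟩ | ⟨A, rfl, _, hAx, hfin⟩ | ⟨B, rfl, hBx, _, _⟩
      · simp at hx
      · intro m
        exact (hfin m).subset (fun n hn => by simpa using hn)
      · exact absurd hBx hx
  | univ => intro m; simp
  | inter U V hU hV ihU ihV =>
      intro m
      refine (((ihU hx.1 m).union (ihV hx.2 m))).subset ?_
      intro n hn
      by_cases h1 : Sum.inl (m, n) ∈ U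
      · exact Or.inr (fun h2 => hn ⟨h1, h2⟩)
      · exact Or.inl h1
  | sUnion S hS ih =>
      obtain ⟨U, hUS, hxU⟩ := hx
      intro m
      exact (ih U hUS hxU m).subset (fun n hn h => hn ⟨U, hUS, h⟩)

lemma arens_rowbd {U : Set ArensT} (h : TopologicalSpace.GenerateOpen arensBase U)
    (hy : Sum.inr false ∈ U) : ∃ M : ℕ, ∀ m n : ℕ, Sum.inl (m, n) ∉ U → m ≤ M := by
  induction h with
  | basic s hs =>
      rcases hs with ⟨p, rfl⟩ | ⟨A, rfl, hAy, _, _⟩ | ⟨B, rfl, _, _, M, hM⟩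
      · simp at hy
      · exact absurd hAy hy
      · exact ⟨M, fun m n hn => hM m n (not_not.mp hn)⟩
  | univ => exact ⟨0, fun m n hn => absurd trivial hn⟩
  | inter U V hU hV ihU ihV =>
      obtain ⟨M1, h1⟩ := ihU hy.1
      obtain ⟨M2, h2⟩ := ihV hy.2
      refine ⟨max M1 M2, fun m n hn => ?_⟩
      by_cases hU' : Sum.inl (m, n) ∈ U
      · exact le_trans (h2 m n (fun h => hn ⟨hU', h⟩)) (le_max_right _ _)
      · exact le_trans (h1 m n hU') (le_max_left _ _)
  | sUnion S hS ih =>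
      obtain ⟨U, hUS, hyU⟩ := hy
      obtain ⟨M, hM⟩ := ih U hUS hyU
      exact ⟨M, fun m n hn => hM m n (fun h => hn ⟨U, hUS, h⟩)⟩

theorem arens_compact : @CompactSpace ArensT arensTop := by
  letI := arensTop
  constructor
  rw [isCompact_iff_finite_subcover]
  intro ι U hU hcov
  have hmem : ∀ z : ArensT, ∃ i, z ∈ U i := by
    intro z
    have := hcov (Set.mem_univ z)
    simpa using this
  obtain ⟨i0, hi0⟩ := hmem (Sum.inr true)
  obtain ⟨i1, hi1⟩ := hmem (Sum.inr false)
  have hgen : ∀ i, TopologicalSpace.GenerateOpen arensBase (U i) := hU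
  have hrow := arens_rowfin (hgen i0) hi0
  obtain ⟨M, hM⟩ := arens_rowbd (hgen i1) hi1
  set S : Set (ℕ × ℕ) := {p | Sum.inl p ∉ U i0 ∧ Sum.inl p ∉ U i1} with hSdef
  have hSfin : S.Finite := by
    have : S ⊆ ⋃ m ∈ Set.Iic M, (fun n => (m, n)) '' {n | Sum.inl (m, n) ∉ U i0} := by
      rintro ⟨m, n⟩ ⟨h0, h1⟩
      exact Set.mem_biUnion (hM m n h1) ⟨n, h0, rfl⟩
    exact Set.Finite.subset
      (Set.Finite.biUnion (Set.finite_Iic M) (fun m _ => (hrow m).image _)) this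
  choose f hf using hmem
  classical
  refine ⟨insert i0 (insert i1 (hSfin.toFinset.image (fun p => f (Sum.inl p)))), ?_⟩
  intro z _
  rcases z with p | b
  · by_cases h0 : Sum.inl p ∈ U i0
    · exact Set.mem_biUnion (Finset.mem_insert_self _ _) h0
    · by_cases h1 : Sum.inl p ∈ U i1
      · exact Set.mem_biUnion (Finset.mem_insert_of_mem (Finset.mem_insert_self _ _)) h1
      · have hpS : p ∈ S := ⟨h0, h1⟩
        refine Set.mem_biUnion ?_ (hf (Sum.inl p))
        exact Finset.mem_insert_of_mem (Finset.mem_insert_of_mem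
          (Finset.mem_image_of_mem _ (hSfin.mem_toFinset.mpr hpS)))
  · cases b
    · exact Set.mem_biUnion (Finset.mem_insert_of_mem (Finset.mem_insert_self _ _)) hi1
    · exact Set.mem_biUnion (Finset.mem_insert_self _ _) hi0
end

section
/- The space (T, τ) defined as (ℕ × ℕ) ∪ {x, y} with the topology where lattice points are isolated, neighborhoods of x are complements of sets containing y with finitely many points per row, and neighborhoods of y are complements of sets containing x meeting only finitely many rows, is not a Hausdorff space: the points x and y cannot be separated by disjoint open sets. -/
theorem arens_not_hausdorff :
    ¬ ∃ U V : Set ArensT, arensTop.IsOpen U ∧ arensTop.IsOpen V ∧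
      Sum.inr true ∈ U ∧ Sum.inr false ∈ V ∧ Disjoint U V := by
  have hx : ∀ U : Set ArensT, arensTop.IsOpen U → Sum.inr true ∈ U →
      ∀ m : ℕ, {n : ℕ | Sum.inl (m, n) ∉ U}.Finite := by
    intro U hU
    induction hU with
    | basic s hs =>
      intro hxs m
      rcases hs with ⟨p, rfl⟩ | ⟨A, rfl, _, hxA, hA⟩ | ⟨B, rfl, hxB, _, _⟩
      · simp at hxs
      · exact (hA m).subset (by intro n hn; simpa using hn)
      · exact absurd hxB hxs
    | univ => intro _ m; simp
    | inter s t _ _ ihs iht =>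
      intro hst m
      exact ((ihs hst.1 m).union (iht hst.2 m)).subset (by
        intro n hn; simp only [Set.mem_setOf_eq, Set.mem_inter_iff, not_and_or] at hn ⊢
        exact hn)
    | sUnion S _ ih =>
      intro hxS m
      rcases hxS with ⟨t, htS, hxt⟩
      exact (ih t htS hxt m).subset (by
        intro n hn
        simp only [Set.mem_setOf_eq] at hn ⊢
        exact fun h => hn (Set.mem_sUnion.mpr ⟨t, htS, h⟩))
  have hy : ∀ V : Set ArensT, arensTop.IsOpen V → Sum.inr false ∈ V →
      ∃ M : ℕ, ∀ m n : ℕ, M < m → Sum.inl (m, n) ∈ V := by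
    intro V hV
    induction hV with
    | basic s hs =>
      intro hys
      rcases hs with ⟨p, rfl⟩ | ⟨A, rfl, hyA, _, _⟩ | ⟨B, rfl, _, _, M, hB⟩
      · simp at hys
      · exact absurd hyA hys
      · exact ⟨M, fun m n hm hmem => absurd (hB m n hmem) (by omega)⟩
    | univ => exact fun _ => ⟨0, fun _ _ _ => trivial⟩
    | inter s t _ _ ihs iht =>
      intro hst
      obtain ⟨M₁, h₁⟩ := ihs hst.1
      obtain ⟨M₂, h₂⟩ := iht hst.2
      exact ⟨max M₁ M₂, fun m n hm =>
        ⟨h₁ m n (lt_of_le_of_lt (le_max_left _ _) hm),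
         h₂ m n (lt_of_le_of_lt (le_max_right _ _) hm)⟩⟩
    | sUnion S _ ih =>
      intro hyS
      rcases hyS with ⟨t, htS, hyt⟩
      obtain ⟨M, hM⟩ := ih t htS hyt
      exact ⟨M, fun m n hm => Set.mem_sUnion.mpr ⟨t, htS, hM m n hm⟩⟩
  rintro ⟨U, V, hU, hV, hxU, hyV, hdisj⟩
  obtain ⟨M, hM⟩ := hy V hV hyV
  have hfin := hx U hU hxU (M + 1)
  obtain ⟨n, hn⟩ := (hfin.infinite_compl).nonempty
  have hnU : Sum.inl (M + 1, n) ∈ U := by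
    simpa using hn
  have hnV : Sum.inl (M + 1, n) ∈ V := hM (M + 1) n (Nat.lt_succ_self M)
  exact hdisj.ne_of_mem hnU hnV rfl
end

section
/- In the space (T, τ) = (ℕ × ℕ) ∪ {x, y} with the topology described (lattice points isolated, neighborhoods of x complements of row-finite sets containing y, neighborhoods of y complements of sets containing x meeting finitely many rows), every compact subset is closed. -/
attribute [local instance] arensTop

lemma arens_base_open {s : Set ArensT} (hs : s ∈ arensBase) : IsOpen s :=
  TopologicalSpace.GenerateOpen.basic s hs

lemma arens_singleton_open (p : ℕ × ℕ) : IsOpen ({Sum.inl p} : Set ArensT) :=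
  arens_base_open (Or.inl ⟨p, rfl⟩)

/-- If `K` is compact and `x ∉ K`, then `K` meets each row finitely. -/
lemma arens_rows_finite {K : Set ArensT} (hK : IsCompact K) (hx : Sum.inr true ∉ K)
    (m : ℕ) : {n : ℕ | Sum.inl (m, n) ∈ K}.Finite := by
  classical
  set B : Set ArensT := {z | z = Sum.inr true ∨ ∃ n, z = Sum.inl (m, n)} with hB
  have hBmem : Bᶜ ∈ arensBase := by
    right; right
    refine ⟨B, rfl, Or.inl rfl, by simp [hB], m, ?_⟩
    rintro m' n' (h | ⟨n'', h⟩)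
    · exact absurd h (by simp)
    · simp only [Sum.inl.injEq, Prod.mk.injEq] at h
      exact h.1.le
  set U : Option (ℕ × ℕ) → Set ArensT := fun o =>
    match o with
    | none => Bᶜ
    | some p => {Sum.inl p} with hU
  have hUo : ∀ i, IsOpen (U i) := by
    rintro (_ | p)
    · exact arens_base_open hBmem
    · exact arens_singleton_open p
  have hcov : K ⊆ ⋃ i, U i := by
    rintro (p | b) hz
    · exact Set.mem_iUnion.2 ⟨some p, rfl⟩
    · cases b with
      | true => exact absurd hz hx
      | false =>
        refine Set.mem_iUnion.2 ⟨none, ?_⟩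
        simp [hU, hB]
  obtain ⟨t, ht⟩ := hK.elim_finite_subcover U hUo hcov
  have hsub : {n : ℕ | Sum.inl (m, n) ∈ K} ⊆
      (fun n : ℕ => (some (m, n) : Option (ℕ × ℕ))) ⁻¹' ↑t := by
    intro n hn
    obtain ⟨i, hit, hiU⟩ := Set.mem_iUnion₂.1 (ht hn)
    match i with
    | none =>
      exact absurd hiU (by simp [hU, hB])
    | some p =>
      simp only [hU, Set.mem_singleton_iff, Sum.inl.injEq] at hiU
      rw [← hiU] at hit
      exact hit
  exact (t.finite_toSet.preimage (fun a _ b _ h => by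
    simpa using h)).subset hsub

/-- If `K` is compact and `y ∉ K`, then `K` meets only finitely many rows. -/
lemma arens_rows_bounded {K : Set ArensT} (hK : IsCompact K) (hy : Sum.inr false ∉ K) :
    ∃ M : ℕ, ∀ m n : ℕ, Sum.inl (m, n) ∈ K → m ≤ M := by
  classical
  set f : ℕ → ℕ := fun m =>
    if h : ∃ n, Sum.inl (m, n) ∈ K then h.choose else 0 with hf
  have hfspec : ∀ m, (∃ n, Sum.inl (m, n) ∈ K) → Sum.inl (m, f m) ∈ K := by
    intro m h
    simpa [hf, dif_pos h] using h.choose_spec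
  set A : Set ArensT :=
    {z | z = Sum.inr false ∨ ∃ m, (∃ n, Sum.inl (m, n) ∈ K) ∧ z = Sum.inl (m, f m)} with hA
  have hAmem : Aᶜ ∈ arensBase := by
    right; left
    refine ⟨A, rfl, Or.inl rfl, by simp [hA], ?_⟩
    intro m
    refine (Set.finite_singleton (f m)).subset ?_
    intro n hn
    rcases hn with h | ⟨m', _, h⟩
    · exact absurd h (by simp)
    · simp only [Sum.inl.injEq, Prod.mk.injEq] at h
      simp [h.1, h.2]
  set U : Option (ℕ × ℕ) → Set ArensT := fun o =>
    match o with
    | none => Aᶜ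
    | some p => {Sum.inl p} with hU
  have hUo : ∀ i, IsOpen (U i) := by
    rintro (_ | p)
    · exact arens_base_open hAmem
    · exact arens_singleton_open p
  have hcov : K ⊆ ⋃ i, U i := by
    rintro (p | b) hz
    · exact Set.mem_iUnion.2 ⟨some p, rfl⟩
    · cases b with
      | false => exact absurd hz hy
      | true =>
        refine Set.mem_iUnion.2 ⟨none, ?_⟩
        simp [hU, hA]
  obtain ⟨t, ht⟩ := hK.elim_finite_subcover U hUo hcov
  have hsub : {m : ℕ | ∃ n, Sum.inl (m, n) ∈ K} ⊆
      (fun m : ℕ => (some (m, f m) : Option (ℕ × ℕ))) ⁻¹' ↑t := by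
    intro m hm
    obtain ⟨i, hit, hiU⟩ := Set.mem_iUnion₂.1 (ht (hfspec m hm))
    match i with
    | none =>
      exact absurd hiU (by simp [hU, hA]; exact hm)
    | some p =>
      simp only [hU, Set.mem_singleton_iff, Sum.inl.injEq] at hiU
      rw [← hiU] at hit
      exact hit
  have hfin : {m : ℕ | ∃ n, Sum.inl (m, n) ∈ K}.Finite :=
    (t.finite_toSet.preimage (fun a _ b _ h =>
      ((by simpa using h : a = b ∧ f a = f b)).1)).subset hsub
  obtain ⟨M, hM⟩ := hfin.bddAbove
  exact ⟨M, fun m n hmn => hM ⟨n, hmn⟩⟩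

theorem arens_compact_isClosed :
    ∀ K : Set ArensT, @IsCompact ArensT arensTop K → @IsClosed ArensT arensTop K := by
  intro K hK
  rw [← isOpen_compl_iff, isOpen_iff_forall_mem_open]
  rintro (p | b) hz
  · exact ⟨{Sum.inl p}, by simpa using hz, arens_singleton_open p, rfl⟩
  · cases b with
    | true =>
      -- separate x from K
      set A : Set ArensT :=
        {z | z = Sum.inr false ∨ (z ∈ K ∧ ∃ p : ℕ × ℕ, z = Sum.inl p)} with hA
      have hAmem : Aᶜ ∈ arensBase := by
        right; left
        refine ⟨A, rfl, Or.inl rfl, ?_, ?_⟩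
        · rintro (h | ⟨hmem, _⟩)
          · exact absurd h (by simp)
          · exact hz hmem
        · intro m
          refine (arens_rows_finite hK hz m).subset ?_
          rintro n (h | ⟨hmem, _⟩)
          · exact absurd h (by simp)
          · exact hmem
      refine ⟨Aᶜ, ?_, arens_base_open hAmem, ?_⟩
      · rintro (p | b) hzA hzK
        · exact hzA (Or.inr ⟨hzK, p, rfl⟩)
        · cases b with
          | false => exact hzA (Or.inl rfl)
          | true => exact hz hzK
      · rintro (h | ⟨hmem, _⟩)
        · exact absurd h (by simp)
        · exact hz hmem
    | false =>
      -- separate y from K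
      obtain ⟨M, hM⟩ := arens_rows_bounded hK hz
      set B : Set ArensT :=
        {z | z = Sum.inr true ∨ (z ∈ K ∧ ∃ p : ℕ × ℕ, z = Sum.inl p)} with hB
      have hBmem : Bᶜ ∈ arensBase := by
        right; right
        refine ⟨B, rfl, Or.inl rfl, ?_, M, ?_⟩
        · rintro (h | ⟨hmem, _⟩)
          · exact absurd h (by simp)
          · exact hz hmem
        · rintro m n (h | ⟨hmem, _⟩)
          · exact absurd h (by simp)
          · exact hM m n hmem
      refine ⟨Bᶜ, ?_, arens_base_open hBmem, ?_⟩
      · rintro (p | b) hzB hzK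
        · exact hzB (Or.inr ⟨hzK, p, rfl⟩)
        · cases b with
          | true => exact hzB (Or.inl rfl)
          | false => exact hz hzK
      · rintro (h | ⟨hmem, _⟩)
        · exact absurd h (by simp)
        · exact hz hmem
end

section
/- There exists a compact, countably infinite topological space (T, τ) which is not the continuous image of Cantor's ternary set; i.e., there is no continuous surjection f : C → T, where C is Cantor's ternary set with the subspace topology from ℝ. -/
/-- Cantor's ternary set `C = { Σ_{n ≥ 1} ω_n / 3^n : ω_n ∈ {0, 2} }`, as a subset of `ℝ`
with the Euclidean (subspace) topology. -/
def cantorC : Set ℝ :=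
  {x | ∃ ω : ℕ → ℝ, (∀ n, ω n = 0 ∨ ω n = 2) ∧ HasSum (fun n => ω n / 3 ^ (n + 1)) x}

open Set Filter Topology OnePoint

/-- The parametrization of the Cantor set by binary sequences. -/
noncomputable def cantorFun (b : ℕ → Bool) : ℝ :=
  ∑' n, (if b n then (2 : ℝ) else 0) / 3 ^ (n + 1)

lemma summable_cantor_bound : Summable (fun n : ℕ => (2 : ℝ) / 3 ^ (n + 1)) := by
  have h : Summable (fun n : ℕ => (2 / 3 : ℝ) * (1 / 3) ^ n) :=
    (summable_geometric_of_lt_one (by norm_num) (by norm_num)).mul_left _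
  refine h.congr fun n => ?_
  rw [one_div, inv_pow, pow_succ]
  field_simp

lemma summable_cantor_term (b : ℕ → Bool) :
    Summable (fun n : ℕ => (if b n then (2 : ℝ) else 0) / 3 ^ (n + 1)) := by
  refine Summable.of_nonneg_of_le (fun n => ?_) (fun n => ?_) summable_cantor_bound
  · cases hb : b n <;> simp [hb] <;> positivity
  · cases hb : b n <;> simp [hb] <;> positivity

lemma range_cantorFun : Set.range cantorFun = cantorC := by
  ext x
  constructor
  · rintro ⟨b, rfl⟩
    refine ⟨fun n => if b n then 2 else 0, fun n => ?_, ?_⟩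
    · cases b n <;> simp
    · exact (summable_cantor_term b).hasSum
  · rintro ⟨ω, hω, hsum⟩
    classical
    refine ⟨fun n => if ω n = 2 then true else false, ?_⟩
    have he : (fun n => (if (if ω n = 2 then true else false) then (2:ℝ) else 0) / 3 ^ (n + 1))
        = fun n => ω n / 3 ^ (n + 1) := by
      funext n
      rcases hω n with h | h <;> simp [h]
    unfold cantorFun
    rw [he, hsum.tsum_eq]

lemma continuous_cantorFun : Continuous cantorFun := by
  have h1 : ∀ n : ℕ, Continuous (fun b : ℕ → Bool => (if b n then (2:ℝ) else 0) / 3 ^ (n + 1)) := by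
    intro n
    have hc : Continuous fun b : ℕ → Bool => (if b n then (2:ℝ) else 0) :=
      Continuous.comp (g := fun v : Bool => if v then (2:ℝ) else 0)
        continuous_of_discreteTopology (continuous_apply n)
    exact hc.div_const _
  have h2 : ∀ (n : ℕ) (b : ℕ → Bool),
      ‖(if b n then (2:ℝ) else 0) / 3 ^ (n + 1)‖ ≤ 2 / 3 ^ (n + 1) := by
    intro n b
    have h3 : (0:ℝ) < 3 ^ (n+1) := by positivity
    cases hb : b n <;>
      simp [hb, Real.norm_eq_abs, abs_div, abs_of_nonneg h3.le] <;> positivity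
  exact continuous_tsum h1 summable_cantor_bound h2

lemma isCompact_cantorC : IsCompact cantorC := by
  rw [← range_cantorFun]
  exact isCompact_range continuous_cantorFun

theorem exists_compact_countably_infinite_not_image_of_cantor :
    ∃ (T : Type) (τ : TopologicalSpace T), @CompactSpace T τ ∧ Countable T ∧ Infinite T ∧
      ¬ ∃ f : cantorC → T, @Continuous _ _ _ τ f ∧ Function.Surjective f := by
  classical
  refine ⟨OnePoint ℚ, inferInstance, inferInstance,
    inferInstanceAs (Countable (Option ℚ)), inferInstanceAs (Infinite (Option ℚ)), ?_⟩
  rintro ⟨f, hfc, hfs⟩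
  haveI : CompactSpace cantorC := isCompact_iff_compactSpace.mp isCompact_cantorC
  -- the preimage of the rationals is open
  set U : Set cantorC := f ⁻¹' (Set.range ((↑) : ℚ → OnePoint ℚ)) with hUdef
  have hUopen : IsOpen U := OnePoint.isOpen_range_coe.preimage hfc
  -- the fiber of `0` is closed and contained in `U`
  set F : Set cantorC := f ⁻¹' {((0:ℚ) : OnePoint ℚ)} with hFdef
  have hFclosed : IsClosed F := isClosed_singleton.preimage hfc
  have hFU : F ⊆ U := by
    intro x hx
    simp only [hFdef, mem_preimage, mem_singleton_iff] at hx
    exact mem_preimage.mpr ⟨0, hx.symm⟩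
  obtain ⟨V, hVopen, hFV, hVU⟩ := normal_exists_closure_subset hFclosed hUopen hFU
  have hKcomp : IsCompact (closure V) := isClosed_closure.isCompact
  have hfK : IsCompact (f '' closure V) := hKcomp.image hfc
  have himg : f '' closure V ⊆ Set.range ((↑) : ℚ → OnePoint ℚ) := by
    rintro y ⟨x, hx, rfl⟩
    exact hVU hx
  -- the trace of `f '' closure V` on `ℚ`
  set s : Set ℚ := ((↑) : ℚ → OnePoint ℚ) ⁻¹' (f '' closure V) with hsdef
  have hcoes : ((↑) : ℚ → OnePoint ℚ) '' s = f '' closure V :=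
    Set.image_preimage_eq_of_subset himg
  have hscomp : IsCompact s := by
    rw [OnePoint.isOpenEmbedding_coe.isEmbedding.isCompact_iff, hcoes]
    exact hfK
  -- `s` is a neighborhood of `0`
  have hns : s ∈ 𝓝 (0 : ℚ) := by
    by_contra hns
    rw [Metric.mem_nhds_iff] at hns
    push_neg at hns
    have hex : ∀ n : ℕ, ∃ r : ℚ, dist r (0:ℚ) < 1 / (n + 1) ∧ r ∉ s := by
      intro n
      obtain ⟨r, hr1, hr2⟩ := Set.not_subset.mp (hns (1 / (n + 1)) (by positivity))
      exact ⟨r, Metric.mem_ball.mp hr1, hr2⟩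
    choose r hr1 hr2 using hex
    have hr0 : Tendsto r atTop (𝓝 (0:ℚ)) := by
      refine tendsto_iff_dist_tendsto_zero.mpr ?_
      exact squeeze_zero (fun n => dist_nonneg) (fun n => (hr1 n).le)
        tendsto_one_div_add_atTop_nhds_zero_nat
    choose x hx using fun n => hfs ((r n : OnePoint ℚ))
    obtain ⟨a, -, φ, hφ, hxa⟩ := isCompact_univ.tendsto_subseq (fun n => Set.mem_univ (x n))
    have hfa : Tendsto (fun n => ((r (φ n) : ℚ) : OnePoint ℚ)) atTop (𝓝 (f a)) := by
      have := (hfc.tendsto a).comp hxa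
      refine this.congr fun n => ?_
      simp [Function.comp, hx]
    have hrφ : Tendsto (fun n => r (φ n)) atTop (𝓝 (0:ℚ)) := hr0.comp hφ.tendsto_atTop
    -- f a cannot be ∞
    have hfane : f a ≠ ∞ := by
      intro ha
      rw [ha] at hfa
      have hKq : IsCompact (insert (0:ℚ) (Set.range r)) := hr0.isCompact_insert_range
      have hWopen : IsOpen (((↑) : ℚ → OnePoint ℚ) '' insert (0:ℚ) (Set.range r))ᶜ :=
        OnePoint.isOpen_compl_image_coe.mpr ⟨hKq.isClosed, hKq⟩
      have hWinf : (∞ : OnePoint ℚ) ∈ (((↑) : ℚ → OnePoint ℚ) '' insert (0:ℚ) (Set.range r))ᶜ :=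
        OnePoint.infty_notMem_image_coe
      have := (hfa.eventually (hWopen.mem_nhds hWinf)).exists
      obtain ⟨n, hn⟩ := this
      exact hn ⟨r (φ n), Or.inr ⟨φ n, rfl⟩, rfl⟩
    obtain ⟨y, hy⟩ := OnePoint.ne_infty_iff_exists.mp hfane
    -- f a = (y : OnePoint ℚ) and y = 0
    have hyt : Tendsto (fun n => r (φ n)) atTop (𝓝 y) := by
      rw [OnePoint.isOpenEmbedding_coe.isEmbedding.tendsto_nhds_iff]
      show Tendsto (fun n => ((r (φ n) : ℚ) : OnePoint ℚ)) atTop (𝓝 ((y : ℚ) : OnePoint ℚ))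
      rw [show ((y : ℚ) : OnePoint ℚ) = f a from hy]
      exact hfa
    have hy0 : y = 0 := tendsto_nhds_unique hyt hrφ
    have haF : a ∈ F := by
      simp only [hFdef, mem_preimage, mem_singleton_iff]
      rw [← hy, hy0]
    have hev : ∀ᶠ n in atTop, x (φ n) ∈ V := hxa.eventually (hVopen.mem_nhds (hFV haF))
    obtain ⟨n, hn⟩ := hev.exists
    apply hr2 (φ n)
    rw [hsdef]
    refine mem_preimage.mpr ?_
    rw [← hx (φ n)]
    exact Set.mem_image_of_mem f (subset_closure hn)
  -- but compact subsets of ℚ have empty interior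
  have h0 : (0:ℚ) ∈ interior s := mem_interior_iff_mem_nhds.mpr hns
  rw [Rat.interior_compact_eq_empty hscomp] at h0
  exact h0
end

section
/- If X is a compact normal topological space in which every singleton is closed, Y is a topological space in which every compact subset is closed, and f : X → Y is a continuous surjection, then Y is Hausdorff. -/
theorem t2_of_kc_image {X Y : Type*} [TopologicalSpace X] [CompactSpace X] [NormalSpace X]
    (hX : ∀ x : X, IsClosed ({x} : Set X)) [TopologicalSpace Y]
    (hY : ∀ K : Set Y, IsCompact K → IsClosed K)
    (f : X → Y) (hf : Continuous f) (hsurj : Function.Surjective f) : T2Space Y := by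
  have hclosed : ∀ C : Set X, IsClosed C → IsClosed (f '' C) := fun C hC =>
    hY _ ((hC.isCompact).image hf)
  constructor
  intro u v huv
  have h1 : IsClosed (f ⁻¹' {u}) := (hY _ isCompact_singleton).preimage hf
  have h2 : IsClosed (f ⁻¹' {v}) := (hY _ isCompact_singleton).preimage hf
  have hdisj : Disjoint (f ⁻¹' {u}) (f ⁻¹' {v}) := by
    rw [Set.disjoint_left]
    rintro x (hx : f x = u) (hx' : f x = v)
    exact huv (hx ▸ hx')
  obtain ⟨U, V, hU, hV, hUs, hVs, hUV⟩ :=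
    normal_separation h1 h2 hdisj
  refine ⟨(f '' Uᶜ)ᶜ, (f '' Vᶜ)ᶜ, (hclosed _ hU.isClosed_compl).isOpen_compl,
    (hclosed _ hV.isClosed_compl).isOpen_compl, ?_, ?_, ?_⟩
  · rintro ⟨x, hx, hfx⟩
    exact hx (hUs hfx)
  · rintro ⟨x, hx, hfx⟩
    exact hx (hVs hfx)
  · rw [Set.disjoint_left]
    rintro y hyU hyV
    obtain ⟨x, rfl⟩ := hsurj y
    have hxU : x ∈ U := by by_contra h; exact hyU ⟨x, h, rfl⟩
    have hxV : x ∈ V := by by_contra h; exact hyV ⟨x, h, rfl⟩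
    exact Set.disjoint_left.mp hUV hxU hxV
end

section
/- A compact KC-space (a space in which every compact subset is closed) that is the continuous image of a compact Hausdorff normal space is Hausdorff. -/
theorem t2_of_compact_kc_image_of_compact_t2_normal {X Y : Type*}
    [TopologicalSpace X] [CompactSpace X] [T2Space X] [NormalSpace X]
    [TopologicalSpace Y] [CompactSpace Y] (hY : ∀ K : Set Y, IsCompact K → IsClosed K)
    (f : X → Y) (hf : Continuous f) (hsurj : Function.Surjective f) : T2Space Y := by
  -- f is a closed map
  have hclosed : IsClosedMap f := fun C hC =>
    hY _ ((hC.isCompact).image hf)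
  constructor
  intro y₁ y₂ hne
  -- fibers are closed and disjoint
  have h1 : IsClosed (f ⁻¹' {y₁}) := (hY {y₁} isCompact_singleton).preimage hf
  have h2 : IsClosed (f ⁻¹' {y₂}) := (hY {y₂} isCompact_singleton).preimage hf
  have hd : Disjoint (f ⁻¹' {y₁}) (f ⁻¹' {y₂}) := by
    rw [Set.disjoint_left]
    rintro x (hx1 : f x = y₁) (hx2 : f x = y₂)
    exact hne (hx1 ▸ hx2)
  obtain ⟨U, V, hU, hV, hsU, hsV, hUV⟩ := normal_separation h1 h2 hd
  refine ⟨(f '' Uᶜ)ᶜ, (f '' Vᶜ)ᶜ, (hclosed _ hU.isClosed_compl).isOpen_compl,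
    (hclosed _ hV.isClosed_compl).isOpen_compl, ?_, ?_, ?_⟩
  · intro ⟨x, hx, hfx⟩
    exact hx (hsU (by simp [hfx]))
  · intro ⟨x, hx, hfx⟩
    exact hx (hsV (by simp [hfx]))
  · rw [Set.disjoint_left]
    intro y hyU hyV
    obtain ⟨x, rfl⟩ := hsurj y
    by_cases hxU : x ∈ U
    · by_cases hxV : x ∈ V
      · exact Set.disjoint_left.mp hUV hxU hxV
      · exact hyV ⟨x, hxV, rfl⟩
    · exact hyU ⟨x, hxU, rfl⟩
end

section
/- Every compact countably infinite Hausdorff space is second-countable. -/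
theorem secondCountable_of_compact_countable_t2 {X : Type*} [TopologicalSpace X]
    [CompactSpace X] [T2Space X] [Countable X] [Infinite X] :
    SecondCountableTopology X := by
  classical
  have sep : ∀ x y : X, ∃ uv : Set X × Set X, IsOpen uv.1 ∧ IsOpen uv.2 ∧
      (x ≠ y → x ∈ uv.1 ∧ y ∈ uv.2 ∧ Disjoint uv.1 uv.2) := by
    intro x y
    by_cases h : x = y
    · exact ⟨(Set.univ, Set.univ), isOpen_univ, isOpen_univ, fun h' => absurd h h'⟩
    · obtain ⟨u, v, hu, hv, hxu, hyv, hd⟩ := t2_separation h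
      exact ⟨(u, v), hu, hv, fun _ => ⟨hxu, hyv, hd⟩⟩
  choose W hU hV hsep using sep
  set B : Set (Set X) := ⋃ (x : X), Set.range (fun F : Finset X => ⋂ y ∈ F, (W x y).1)
    with hB
  have hBc : B.Countable := Set.countable_iUnion fun x => Set.countable_range _
  have hbasis : TopologicalSpace.IsTopologicalBasis B := by
    apply TopologicalSpace.isTopologicalBasis_of_isOpen_of_nhds
    · rintro s hs
      simp only [hB, Set.mem_iUnion, Set.mem_range] at hs
      obtain ⟨x, F, rfl⟩ := hs
      exact isOpen_biInter_finset fun y _ => hU x y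
    · intro x u hxu hu
      have hcomp : IsCompact uᶜ := hu.isClosed_compl.isCompact
      have hcover : uᶜ ⊆ ⋃ y ∈ uᶜ, (W x y).2 := by
        intro y hy
        have hxy : x ≠ y := fun h => hy (h ▸ hxu)
        exact Set.mem_biUnion hy (hsep x y hxy).2.1
      obtain ⟨b, hbsub, hbfin, hbcov⟩ :=
        hcomp.elim_finite_subcover_image (fun y _ => hV x y) hcover
      refine ⟨⋂ y ∈ hbfin.toFinset, (W x y).1, ?_, ?_, ?_⟩
      · exact Set.mem_iUnion.2 ⟨x, ⟨hbfin.toFinset, rfl⟩⟩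
      · refine Set.mem_iInter₂.2 fun y hy => ?_
        have hyb : y ∈ b := hbfin.mem_toFinset.1 hy
        have hxy : x ≠ y := fun h => (hbsub hyb) (h ▸ hxu)
        exact (hsep x y hxy).1
      · intro z hz
        by_contra hzu
        obtain ⟨y, hyb, hzy⟩ := Set.mem_iUnion₂.1 (hbcov hzu)
        have hzU : z ∈ (W x y).1 := Set.mem_iInter₂.1 hz y (hbfin.mem_toFinset.2 hyb)
        have hxy : x ≠ y := fun h => (hbsub hyb) (h ▸ hxu)
        exact (hsep x y hxy).2.2.le_bot ⟨hzU, hzy⟩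
  exact hbasis.secondCountableTopology hBc
end

section
/- Every compact countably infinite Hausdorff space is the continuous image of Cantor's ternary set: if X is compact Hausdorff with countably infinite underlying set, then there exists a continuous surjection from C onto X. -/
noncomputable section CantorAux

open Set Function Topology

namespace CantorAux

/-- The real digit associated to a boolean. -/
def dig (b : ℕ → Bool) (n : ℕ) : ℝ := if b n then 2 else 0

lemma abs_dig_sub_le (b b' : ℕ → Bool) (n : ℕ) : |dig b n - dig b' n| ≤ 2 := by
  unfold dig; split_ifs <;> norm_num

lemma bound_aux (u : ℝ) (n : ℕ) (h : |u| ≤ 2) :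
    ‖u / 3 ^ (n + 1)‖ ≤ 2 * (1 / 3 : ℝ) ^ (n + 1) := by
  have h3 : (0:ℝ) < 3 ^ (n+1) := by positivity
  rw [Real.norm_eq_abs, abs_div, abs_of_pos h3]
  have he : (2:ℝ) * (1/3)^(n+1) = 2 / 3^(n+1) := by
    rw [div_pow, one_pow, mul_one_div]
  rw [he]
  gcongr

lemma summable_geom_shift : Summable (fun n : ℕ => 2 * (1 / 3 : ℝ) ^ (n + 1)) := by
  apply Summable.mul_left
  exact (summable_geometric_of_lt_one (by norm_num) (by norm_num)).comp_injective
    (add_left_injective 1)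

lemma summable_aux (u : ℕ → ℝ) (h : ∀ n, |u n| ≤ 2) :
    Summable (fun n => u n / 3 ^ (n + 1)) := by
  refine Summable.of_norm (summable_geom_shift.of_nonneg_of_le
    (fun n => norm_nonneg _) (fun n => bound_aux (u n) n (h n)))

/-- The canonical map from Cantor space to ℝ. -/
def hFun (b : ℕ → Bool) : ℝ := ∑' n, dig b n / 3 ^ (n + 1)

lemma abs_dig_le (b : ℕ → Bool) (n : ℕ) : |dig b n| ≤ 2 := by
  unfold dig; split_ifs <;> norm_num

lemma summable_dig (b : ℕ → Bool) : Summable (fun n => dig b n / 3 ^ (n + 1)) :=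
  summable_aux _ (abs_dig_le b)

lemma hasSum_hFun (b : ℕ → Bool) : HasSum (fun n => dig b n / 3 ^ (n + 1)) (hFun b) :=
  (summable_dig b).hasSum

lemma hFun_mem (b : ℕ → Bool) : hFun b ∈ cantorC := by
  refine ⟨dig b, fun n => ?_, hasSum_hFun b⟩
  unfold dig; split_ifs <;> simp

lemma hFun_surj : ∀ x ∈ cantorC, ∃ b : ℕ → Bool, hFun b = x := by
  rintro x ⟨ω, hω, hx⟩
  classical
  refine ⟨fun n => if ω n = 2 then true else false, ?_⟩
  have hdig : (fun n => dig (fun n => if ω n = 2 then true else false) n) = ω := by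
    funext n
    rcases hω n with h | h
    · have h2 : ω n ≠ 2 := by rw [h]; norm_num
      simp [dig, h2, h]
    · simp [dig, h]
  have hdig' : ∀ n, dig (fun n => if ω n = 2 then true else false) n = ω n :=
    fun n => congrFun hdig n
  have h1 := hasSum_hFun (fun n => if ω n = 2 then true else false)
  simp only [hdig'] at h1
  exact h1.unique hx

lemma hFun_inj : Function.Injective hFun := by
  intro b b' hbb'
  by_contra hne
  have hex : ∃ k, b k ≠ b' k := Function.ne_iff.mp hne
  set n := Nat.find hex with hn_def
  have hn : b n ≠ b' n := Nat.find_spec hex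
  have hlt : ∀ k < n, b k = b' k := fun k hk => not_not.mp (Nat.find_min hex hk)
  set S : ℕ → ℝ := fun k => (dig b k - dig b' k) / 3 ^ (k + 1) with hS_def
  have hS : Summable S := summable_aux _ (abs_dig_sub_le b b')
  have hsum0 : ∑' k, S k = 0 := by
    have h1 := (hasSum_hFun b).sub (hasSum_hFun b')
    rw [hbb', sub_self] at h1
    have heq : (fun k => dig b k / 3 ^ (k+1) - dig b' k / 3 ^ (k+1)) = S := by
      funext k; rw [hS_def]; ring
    rw [heq] at h1
    exact h1.tsum_eq
  have hsplit := Summable.sum_add_tsum_nat_add (n + 1) hS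
  have hhead : ∑ i ∈ Finset.range (n + 1), S i = S n := by
    refine Finset.sum_eq_single_of_mem n (Finset.self_mem_range_succ n) (fun k hk hkn => ?_)
    have hklt : k < n := lt_of_le_of_ne (Nat.lt_succ_iff.mp (Finset.mem_range.mp hk)) hkn
    have hd : dig b k = dig b' k := by rw [dig, dig, hlt k hklt]
    simp [hS_def, hd]
  have h3 : (0:ℝ) < 3 ^ (n + 1) := by positivity
  have habs : |dig b n - dig b' n| = 2 := by
    cases hb : b n <;> cases hb' : b' n
    · exact absurd (hb.trans hb'.symm) hn
    · norm_num [dig, hb, hb']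
    · norm_num [dig, hb, hb']
    · exact absurd (hb.trans hb'.symm) hn
  have hSn : |S n| = 2 / 3 ^ (n + 1) := by
    rw [hS_def, abs_div, abs_of_pos h3, habs]
  -- tail estimate
  set T : ℝ := ∑' i, S (i + (n + 1)) with hT_def
  set g : ℕ → ℝ := fun i => 2 / 3 ^ (n + 2) * (1 / 3) ^ i with hg_def
  have hg : Summable g := (summable_geometric_of_lt_one (by norm_num) (by norm_num)).mul_left _
  have hle : ∀ i, |S (i + (n + 1))| ≤ g i := by
    intro i
    have h3' : (0:ℝ) < 3 ^ (i + (n + 1) + 1) := by positivity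
    have heq : g i = 2 / 3 ^ (i + (n + 1) + 1) := by
      have hp : (3:ℝ) ^ (i + (n + 1) + 1) = 3 ^ (n + 2) * 3 ^ i := by
        rw [← pow_add]; ring_nf
      show (2:ℝ) / 3 ^ (n + 2) * (1 / 3) ^ i = _
      rw [hp, div_pow, one_pow, div_mul_div_comm, mul_one]
    rw [hS_def, abs_div, abs_of_pos h3', heq]
    gcongr
    exact abs_dig_sub_le b b' _
  have habs_sum : Summable (fun i => |S (i + (n + 1))|) :=
    hg.of_nonneg_of_le (fun i => abs_nonneg _) hle
  have hT1 : |T| ≤ ∑' i, |S (i + (n + 1))| := by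
    rw [hT_def, ← Real.norm_eq_abs]
    refine (norm_tsum_le_tsum_norm ?_)
    simpa [Real.norm_eq_abs] using habs_sum
  have hT2 : ∑' i, |S (i + (n + 1))| ≤ ∑' i, g i := Summable.tsum_le_tsum hle habs_sum hg
  have hgval : ∑' i, g i = 1 / 3 ^ (n + 1) := by
    rw [hg_def, tsum_mul_left, tsum_geometric_of_lt_one (by norm_num) (by norm_num)]
    have hp : (3:ℝ) ^ (n + 2) = 3 ^ (n + 1) * 3 := by ring
    rw [hp]
    norm_num
    field_simp
  have hTle : |T| ≤ 1 / 3 ^ (n + 1) := by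
    calc |T| ≤ ∑' i, |S (i + (n + 1))| := hT1
    _ ≤ ∑' i, g i := hT2
    _ = 1 / 3 ^ (n + 1) := hgval
  -- contradiction
  have hzero : S n + T = 0 := by
    rw [← hsum0, ← hsplit, hhead]
  have hST : |S n| = |T| := by
    have : S n = -T := by linarith
    rw [this, abs_neg]
  rw [hSn] at hST
  have hfin : (2:ℝ) / 3 ^ (n+1) ≤ 1 / 3 ^ (n+1) := hST.le.trans hTle
  have hi : (0:ℝ) < ((3:ℝ) ^ (n+1))⁻¹ := by positivity
  rw [div_eq_mul_inv, div_eq_mul_inv] at hfin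
  nlinarith

lemma hFun_cont : Continuous hFun := by
  have : Continuous fun b : ℕ → Bool => ∑' n, dig b n / 3 ^ (n + 1) := by
    refine continuous_tsum (fun i => ?_) summable_geom_shift (fun n x => bound_aux _ _ (abs_dig_le x n))
    have h1 : Continuous fun b : ℕ → Bool => b i := continuous_apply i
    have h2 : Continuous fun t : Bool => if t then (2:ℝ) else 0 := continuous_of_discreteTopology
    exact (h2.comp h1).div_const _
  exact this

/-- The homeomorphism from Cantor space onto the ternary Cantor set. -/
def cantorEquiv : (ℕ → Bool) ≃ cantorC := by
  refine Equiv.ofBijective (fun b => ⟨hFun b, hFun_mem b⟩) ⟨?_, ?_⟩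
  · intro b b' h
    exact hFun_inj (congrArg Subtype.val h)
  · rintro ⟨x, hx⟩
    obtain ⟨b, hb⟩ := hFun_surj x hx
    exact ⟨b, Subtype.ext hb⟩

lemma cantorEquiv_cont : Continuous (cantorEquiv : (ℕ → Bool) → cantorC) :=
  hFun_cont.subtype_mk _

/-- Cantor space is homeomorphic to the ternary Cantor set. -/
def cantorHomeo : (ℕ → Bool) ≃ₜ cantorC :=
  Continuous.homeoOfEquivCompactToT2 (f := cantorEquiv) cantorEquiv_cont

end CantorAux
end CantorAux

theorem compact_countable_t2_image_of_cantor {X : Type*} [TopologicalSpace X]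
    [CompactSpace X] [T2Space X] [Countable X] [Infinite X] :
    ∃ f : cantorC → X, Continuous f ∧ Function.Surjective f := by
  classical
  -- X is totally separated
  have htd : TotallyDisconnectedSpace X := by
    constructor
    intro t _ ht a ha b hb
    by_contra hab
    obtain ⟨f, hf0, hf1, -⟩ := exists_continuous_zero_one_of_isClosed
      (isClosed_singleton (x := a)) (isClosed_singleton (x := b))
      (Set.disjoint_singleton.mpr hab)
    have himage : Set.Icc (0:ℝ) 1 ⊆ f '' t := by
      apply IsPreconnected.Icc_subset (ht.image f f.continuous.continuousOn)
      · exact ⟨a, ha, hf0 rfl⟩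
      · exact ⟨b, hb, hf1 rfl⟩
    have hcnt : (Set.Icc (0:ℝ) 1).Countable := ((Set.to_countable t).image f).mono himage
    have hmk := Cardinal.mk_Icc_real (zero_lt_one (α := ℝ))
    have := hcnt.le_aleph0
    rw [hmk] at this
    exact absurd this (not_le.mpr Cardinal.aleph0_lt_continuum)
  have hts : TotallySeparatedSpace X := loc_compact_t2_tot_disc_iff_tot_sep.mp htd
  -- separating clopens
  have hU : ∀ p : X × X, ∃ U : Set X, IsClopen U ∧ (p.1 ≠ p.2 → p.1 ∈ U ∧ p.2 ∉ U) := by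
    intro p
    by_cases h : p.1 = p.2
    · exact ⟨Set.univ, isClopen_univ, fun hn => absurd h hn⟩
    · obtain ⟨U, hU, h1, h2⟩ := exists_isClopen_of_totally_separated h
      exact ⟨U, hU, fun _ => ⟨h1, h2⟩⟩
  choose U hUclopen hUsep using hU
  obtain ⟨den⟩ := nonempty_denumerable (X × X)
  let e : X × X ≃ ℕ := Denumerable.eqv (X × X)
  let F : X → (ℕ → Bool) := fun x n => (U (e.symm n)).boolIndicator x
  have F_cont : Continuous F :=
    continuous_pi fun n => (continuous_boolIndicator_iff_isClopen _).mpr (hUclopen _)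
  have F_inj : Function.Injective F := by
    intro x y hxy
    by_contra hne
    obtain ⟨h1, h2⟩ := hUsep (x, y) hne
    have := congrFun hxy (e (x, y))
    simp only [F, Equiv.symm_apply_apply] at this
    rw [((U (x, y)).mem_iff_boolIndicator x).mp h1] at this
    exact h2 (((U (x, y)).mem_iff_boolIndicator y).mpr this.symm)
  have s_closed : IsClosed (Set.range F) :=
    (F_cont.isClosedEmbedding F_inj).isClosed_range
  have s_ne : (Set.range F).Nonempty := Set.range_nonempty F
  obtain ⟨r, -, r_surj, r_cont⟩ :=
    PiNat.exists_retraction_subtype_of_isClosed (E := fun _ => Bool) s_closed s_ne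
  let eX : X ≃ Set.range F := Equiv.ofInjective F F_inj
  have eX_cont : Continuous (eX : X → Set.range F) := F_cont.subtype_mk _
  let homeoX : X ≃ₜ Set.range F := Continuous.homeoOfEquivCompactToT2 (f := eX) eX_cont
  refine ⟨homeoX.symm ∘ r ∘ CantorAux.cantorHomeo.symm, ?_, ?_⟩
  · exact homeoX.symm.continuous.comp (r_cont.comp CantorAux.cantorHomeo.symm.continuous)
  · exact homeoX.symm.surjective.comp (r_surj.comp CantorAux.cantorHomeo.symm.surjective)
end

section
/- Every nonempty compact metric space is the continuous image of Cantor's ternary set: for any nonempty compact metric space X there exists a continuous surjection f : C → X. -/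
open Cardinal Set Function Filter Topology

noncomputable section HAaux

namespace HAaux

/-! ### The ternary map onto the Cantor set -/

/-- The map sending a boolean sequence to the corresponding point of the Cantor set. -/
def terMap (b : ℕ → Bool) : ℝ := 2 / 3 * cantorFunction (1 / 3) b

lemma aux_eq (b : ℕ → Bool) (n : ℕ) :
    (2 : ℝ) / 3 * cantorFunctionAux (1 / 3) b n = (cond (b n) 2 0 : ℝ) / 3 ^ (n + 1) := by
  cases h : b n <;> simp [cantorFunctionAux, h, pow_succ] <;> ring

lemma terMap_hasSum (b : ℕ → Bool) :
    HasSum (fun n => (cond (b n) 2 0 : ℝ) / 3 ^ (n + 1)) (terMap b) := by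
  have h := (summable_cantor_function b (by norm_num : (0:ℝ) ≤ 1/3)
    (by norm_num : (1:ℝ)/3 < 1)).hasSum.mul_left (2/3)
  simpa only [aux_eq, terMap, cantorFunction] using h

lemma terMap_continuous : Continuous terMap := by
  apply continuous_const.mul
  have : Continuous fun b : ℕ → Bool => ∑' n, cantorFunctionAux (1/3) b n := by
    apply continuous_tsum (u := fun n => (1/3 : ℝ) ^ n)
    · intro n
      exact (continuous_of_discreteTopology
        (f := fun t : Bool => cond t ((1/3:ℝ)^n) 0)).comp (continuous_apply n)
    · exact summable_geometric_of_lt_one (by norm_num) (by norm_num)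
    · intro n b
      cases h : b n <;> simp [cantorFunctionAux, h] <;> positivity
  exact this

lemma terMap_injective : Function.Injective terMap := by
  intro a b h
  have := mul_left_cancel₀ (by norm_num : (2:ℝ)/3 ≠ 0) h
  exact cantorFunction_injective (by norm_num) (by norm_num) this

lemma terMap_mem (b : ℕ → Bool) : terMap b ∈ cantorC := by
  refine ⟨fun n => cond (b n) 2 0, fun n => by cases h : b n <;> simp [h], terMap_hasSum b⟩

lemma terMap_surj {x : ℝ} (hx : x ∈ cantorC) : ∃ b, terMap b = x := by
  classical
  obtain ⟨ω, hω, hs⟩ := hx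
  refine ⟨fun n => if ω n = 2 then true else false, ?_⟩
  have he : (fun n => (cond (if ω n = 2 then true else false) 2 0 : ℝ) / 3 ^ (n + 1))
      = fun n => ω n / 3 ^ (n + 1) := by
    funext n
    rcases hω n with h | h <;> rw [h] <;> norm_num
  have := terMap_hasSum (fun n => if ω n = 2 then true else false)
  rw [he] at this
  exact this.unique hs

/-! ### The binary expansion map onto `[0, 1]` -/

/-- Greedy partial sums of the binary expansion of `x`. -/
def binApprox (x : ℝ) : ℕ → ℝ
  | 0 => 0
  | n + 1 => binApprox x n +
      (if binApprox x n + (1/2 : ℝ) ^ (n+1) ≤ x then (1/2 : ℝ) ^ (n+1) else 0)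

open Classical in
/-- Greedy binary digits of `x`. -/
def binDigit (x : ℝ) (n : ℕ) : Bool := decide (binApprox x n + (1/2 : ℝ) ^ (n+1) ≤ x)

/-- The binary-expansion map from the Boolean sequence space onto `[0,1]`. -/
def binMap (b : ℕ → Bool) : ℝ := ∑' n, (cond (b n) ((1/2 : ℝ) ^ (n+1)) 0)

lemma hfun : (fun n : ℕ => (1/2 : ℝ) ^ (n+1)) = fun n => 1/2/2^n := by
  funext n; rw [pow_succ, one_div_pow]; ring

lemma summable_half_succ : Summable fun n : ℕ => (1/2 : ℝ) ^ (n+1) := by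
  rw [hfun]; exact ⟨1, hasSum_geometric_two' 1⟩

lemma tsum_half_succ : ∑' n : ℕ, (1/2 : ℝ) ^ (n+1) = 1 := by
  rw [hfun]; exact tsum_geometric_two' 1

lemma binMap_summable (b : ℕ → Bool) :
    Summable fun n => (cond (b n) ((1/2 : ℝ) ^ (n+1)) 0) := by
  refine Summable.of_nonneg_of_le ?_ ?_ summable_half_succ
  · intro n; cases h : b n <;> simp [h] <;> positivity
  · intro n; cases h : b n <;> simp [h] <;> positivity

lemma binMap_nonneg (b : ℕ → Bool) : 0 ≤ binMap b := by
  apply tsum_nonneg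
  intro n; cases h : b n <;> simp [h] <;> positivity

lemma binMap_le_one (b : ℕ → Bool) : binMap b ≤ 1 := by
  have : binMap b ≤ ∑' n : ℕ, (1/2 : ℝ) ^ (n+1) := by
    apply Summable.tsum_le_tsum _ (binMap_summable b) summable_half_succ
    intro n; cases h : b n <;> simp [h] <;> positivity
  rw [tsum_half_succ] at this; exact this

lemma binMap_mem (b : ℕ → Bool) : binMap b ∈ Set.Icc (0:ℝ) 1 :=
  ⟨binMap_nonneg b, binMap_le_one b⟩

lemma binMap_continuous : Continuous binMap := by
  apply continuous_tsum (u := fun n => (1/2 : ℝ) ^ (n+1))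
  · intro n
    exact (continuous_of_discreteTopology
      (f := fun t : Bool => cond t ((1/2:ℝ)^(n+1)) 0)).comp (continuous_apply n)
  · exact summable_half_succ
  · intro n b
    cases h : b n <;> simp [h] <;> positivity

lemma binApprox_invariant {x : ℝ} (hx0 : 0 ≤ x) (hx1 : x ≤ 1) (n : ℕ) :
    binApprox x n ≤ x ∧ x ≤ binApprox x n + (1/2 : ℝ) ^ n := by
  induction n with
  | zero => simpa [binApprox] using ⟨hx0, hx1⟩
  | succ n ih =>
    by_cases h : binApprox x n + (1/2 : ℝ) ^ (n+1) ≤ x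
    · constructor
      · simp only [binApprox, if_pos h]; exact h
      · simp only [binApprox, if_pos h]
        have : (1/2 : ℝ) ^ n = (1/2:ℝ)^(n+1) + (1/2:ℝ)^(n+1) := by ring
        linarith [ih.2]
    · constructor
      · simp only [binApprox, if_neg h, add_zero]; exact ih.1
      · simp only [binApprox, if_neg h, add_zero]
        push_neg at h; exact h.le

lemma binApprox_eq_sum (x : ℝ) (n : ℕ) :
    ∑ i ∈ Finset.range n, (cond (binDigit x i) ((1/2 : ℝ) ^ (i+1)) 0) = binApprox x n := by
  induction n with
  | zero => simp [binApprox]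
  | succ n ih =>
    rw [Finset.sum_range_succ, ih]
    show binApprox x n + _ = binApprox x (n+1)
    simp only [binApprox, binDigit]
    by_cases h : binApprox x n + (1/2 : ℝ) ^ (n+1) ≤ x <;> simp [h]

lemma binMap_surj {x : ℝ} (hx0 : 0 ≤ x) (hx1 : x ≤ 1) : binMap (binDigit x) = x := by
  have hten : Tendsto (fun n => binApprox x n) atTop (𝓝 x) := by
    refine tendsto_of_tendsto_of_tendsto_of_le_of_le
      (g := fun n => x - (1/2 : ℝ) ^ n) (h := fun _ => x) ?_ tendsto_const_nhds ?_ ?_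
    · simpa using tendsto_const_nhds.sub
        (tendsto_pow_atTop_nhds_zero_of_lt_one (by norm_num) (by norm_num) :
          Tendsto (fun n : ℕ => (1/2:ℝ)^n) atTop (𝓝 0))
    · intro n; simp only; linarith [(binApprox_invariant hx0 hx1 n).2]
    · intro n; exact (binApprox_invariant hx0 hx1 n).1
  have : HasSum (fun n => (cond (binDigit x n) ((1/2 : ℝ) ^ (n+1)) 0)) x := by
    rw [hasSum_iff_tendsto_nat_of_nonneg
      (fun i => by cases h : binDigit x i <;> simp [h] <;> positivity)]
    simpa only [binApprox_eq_sum] using hten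
  exact this.tsum_eq

/-! ### The surjection onto the Hilbert cube -/

/-- A pairing bijection `ℕ × ℕ ≃ ℕ`. -/
def pair : ℕ × ℕ ≃ ℕ := Denumerable.eqv (ℕ × ℕ)

/-- A continuous surjection of the Cantor space onto the Hilbert cube. -/
def hilbMap (b : ℕ → Bool) : ℕ → Set.Icc (0:ℝ) 1 :=
  fun n => ⟨binMap (fun m => b (pair (n, m))), binMap_mem _⟩

lemma hilbMap_continuous : Continuous hilbMap := by
  refine continuous_pi fun n => Continuous.subtype_mk ?_ _
  exact binMap_continuous.comp (continuous_pi fun m => continuous_apply _)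

lemma hilbMap_surjective : Surjective hilbMap := by
  intro y
  refine ⟨fun k => binDigit (y (pair.symm k).1 : ℝ) (pair.symm k).2, ?_⟩
  funext n
  apply Subtype.ext
  show binMap _ = _
  have : (fun m => binDigit (y ((pair.symm) (pair (n, m))).1 : ℝ) ((pair.symm) (pair (n, m))).2)
      = binDigit (y n : ℝ) := by
    funext m; rw [Equiv.symm_apply_apply]
  rw [this, binMap_surj (y n).2.1 (y n).2.2]

end HAaux

end HAaux

open HAaux in
/-- Hausdorff–Alexandroff: every nonempty compact metric space is a continuous image of `C`. -/
theorem hausdorff_alexandroff {X : Type*} [MetricSpace X] [CompactSpace X] [Nonempty X] :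
    ∃ f : cantorC → X, Continuous f ∧ Function.Surjective f := by
  classical
  -- Cantor space is homeomorphic to `cantorC`
  let g : (ℕ → Bool) → cantorC := fun b => ⟨terMap b, terMap_mem b⟩
  have gbij : Function.Bijective g := by
    constructor
    · intro a b h
      exact terMap_injective (congrArg Subtype.val h)
    · rintro ⟨x, hx⟩
      obtain ⟨b, hb⟩ := terMap_surj hx
      exact ⟨b, Subtype.ext hb⟩
  let E : (ℕ → Bool) ≃ cantorC := Equiv.ofBijective g gbij
  have hEc : Continuous (E : (ℕ → Bool) → cantorC) :=
    terMap_continuous.subtype_mk _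
  let homeo : (ℕ → Bool) ≃ₜ cantorC := hEc.homeoOfEquivCompactToT2
  -- embed X into the Hilbert cube
  let u : ℕ → X := TopologicalSpace.denseSeq X
  let εX : X → ℕ → Set.Icc (0:ℝ) 1 := fun x n =>
    ⟨min (dist x (u n)) 1, ⟨le_min dist_nonneg zero_le_one, min_le_right _ _⟩⟩
  have εXc : Continuous εX := by
    refine continuous_pi fun n => Continuous.subtype_mk ?_ _
    exact (continuous_id.dist continuous_const).min continuous_const
  have εXinj : Injective εX := by
    intro x y h
    by_contra hxy
    have hd : 0 < dist x y := dist_pos.2 hxy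
    set ε : ℝ := min (dist x y / 3) (1/2) with hε
    have hεpos : 0 < ε := lt_min (by linarith) (by norm_num)
    obtain ⟨n, hn⟩ := (TopologicalSpace.denseRange_denseSeq X).exists_dist_lt x hεpos
    have hε1 : ε < 1 := lt_of_le_of_lt (min_le_right _ _) (by norm_num)
    have h1 : dist x (u n) < 1 := hn.trans hε1
    have hcong : min (dist x (u n)) 1 = min (dist y (u n)) 1 :=
      congrArg Subtype.val (congrFun h n)
    rw [min_eq_left h1.le] at hcong
    have h2 : dist y (u n) < ε := by
      rcases le_or_gt (dist y (u n)) 1 with h' | h'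
      · rw [min_eq_left h'] at hcong; rw [← hcong]; exact hn
      · rw [min_eq_right h'.le] at hcong
        exact absurd hcong (by linarith)
    have : dist x y ≤ dist x (u n) + dist (u n) y := dist_triangle _ _ _
    rw [dist_comm (u n) y] at this
    have hε3 : ε ≤ dist x y / 3 := min_le_left _ _
    linarith
  let K : Set (ℕ → Set.Icc (0:ℝ) 1) := Set.range εX
  have Kcl : IsClosed K := (isCompact_range εXc).isClosed
  let eX : X ≃ K := Equiv.ofInjective εX εXinj
  have eXc : Continuous (eX : X → K) := εXc.subtype_mk _
  let homeoX : X ≃ₜ K := eXc.homeoOfEquivCompactToT2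
  -- retraction onto the preimage of K
  let A : Set (ℕ → Bool) := hilbMap ⁻¹' K
  have Acl : IsClosed A := Kcl.preimage hilbMap_continuous
  have Ane : A.Nonempty := by
    obtain ⟨b, hb⟩ := hilbMap_surjective (εX (Classical.arbitrary X))
    exact ⟨b, by simp [A, K, hb]⟩
  obtain ⟨r, -, hrsurj, hrc⟩ := PiNat.exists_retraction_subtype_of_isClosed Acl Ane
  let q : A → K := fun a => ⟨hilbMap a, a.2⟩
  have qc : Continuous q :=
    (hilbMap_continuous.comp continuous_subtype_val).subtype_mk _
  have qsurj : Surjective q := by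
    rintro ⟨k, hk⟩
    obtain ⟨b, hb⟩ := hilbMap_surjective k
    exact ⟨⟨b, by simp [A, hb, hk]⟩, Subtype.ext hb⟩
  refine ⟨homeoX.symm ∘ q ∘ r ∘ homeo.symm, ?_, ?_⟩
  · exact homeoX.symm.continuous.comp (qc.comp (hrc.comp homeo.symm.continuous))
  · exact homeoX.symm.surjective.comp (qsurj.comp (hrsurj.comp homeo.symm.surjective))
end

section
/- For a compact Hausdorff space X, the following are equivalent: (1) X is metrizable; (2) X is second-countable; (3) X is nonempty implies X is a continuous image of Cantor's ternary set (or X is empty). -/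
open Set Function Topology Filter

namespace CantorAux

noncomputable def wsum (c b : ℝ) (ω : ℕ → Bool) : ℝ := ∑' n, (cond (ω n) c 0) / b ^ (n+1)

lemma term_nonneg {c b : ℝ} (hc : 0 ≤ c) (hb : 1 < b) (ω : ℕ → Bool) (n : ℕ) :
    0 ≤ (cond (ω n) c 0) / b ^ (n+1) := by
  have : (0:ℝ) < b := lt_trans one_pos hb
  apply div_nonneg _ (by positivity)
  cases ω n <;> simp [hc]

lemma term_le {c b : ℝ} (hc : 0 ≤ c) (hb : 1 < b) (ω : ℕ → Bool) (n : ℕ) :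
    (cond (ω n) c 0) / b ^ (n+1) ≤ c / b ^ (n+1) := by
  have hb0 : (0:ℝ) < b := lt_trans one_pos hb
  apply div_le_div_of_nonneg_right ?_ (by positivity)
  cases ω n <;> simp [hc]

lemma summable_bound {c b : ℝ} (hb : 1 < b) : Summable (fun n : ℕ => c / b ^ (n+1)) := by
  have hb0 : (0:ℝ) < b := lt_trans one_pos hb
  have : Summable (fun n : ℕ => (c/b) * (1/b) ^ n) := by
    apply Summable.mul_left
    exact summable_geometric_of_lt_one (by positivity) (by rw [div_lt_one hb0]; exact hb)
  refine this.congr fun n => ?_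
  rw [div_pow, one_pow, pow_succ]
  field_simp

lemma summable_wsum {c b : ℝ} (hc : 0 ≤ c) (hb : 1 < b) (ω : ℕ → Bool) :
    Summable (fun n => (cond (ω n) c 0) / b ^ (n+1)) :=
  Summable.of_nonneg_of_le (term_nonneg hc hb ω) (term_le hc hb ω) (summable_bound hb)

lemma hasSum_wsum {c b : ℝ} (hc : 0 ≤ c) (hb : 1 < b) (ω : ℕ → Bool) :
    HasSum (fun n => (cond (ω n) c 0) / b ^ (n+1)) (wsum c b ω) :=
  (summable_wsum hc hb ω).hasSum

lemma continuous_wsum {c b : ℝ} (hc : 0 ≤ c) (hb : 1 < b) : Continuous (wsum c b) := by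
  apply continuous_tsum (u := fun n : ℕ => c / b ^ (n+1)) ?_ (summable_bound hb)
  · intro n ω
    rw [Real.norm_eq_abs, abs_of_nonneg (term_nonneg hc hb ω n)]
    exact term_le hc hb ω n
  · intro n
    exact Continuous.div_const ((continuous_of_discreteTopology
      (f := fun v : Bool => cond v c 0)).comp (continuous_apply n)) _



lemma wsum_mem_cantorC (ω : ℕ → Bool) : wsum 2 3 ω ∈ cantorC :=
  ⟨fun n => cond (ω n) 2 0, fun n => by cases h : ω n <;> simp [h],
    hasSum_wsum (by norm_num) (by norm_num) ω⟩

lemma cantorC_subset_range (x : ℝ) (hx : x ∈ cantorC) : ∃ ω : ℕ → Bool, wsum 2 3 ω = x := by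
  obtain ⟨ω, hω, hsum⟩ := hx
  refine ⟨fun n => decide (ω n = 2), ?_⟩
  have heq : ∀ n, (cond (decide (ω n = 2)) 2 0 : ℝ) = ω n := by
    intro n
    rcases hω n with h | h <;> simp [h]
  refine HasSum.unique ?_ hsum
  have := hasSum_wsum (c := 2) (b := 3) (by norm_num) (by norm_num) (fun n => decide (ω n = 2))
  exact this.congr_fun fun n => by rw [heq n]

lemma tail_nonneg (x : ℕ → Bool) (m : ℕ) :
    (0:ℝ) ≤ ∑' k, (cond (x (k+m)) 2 0)/3^((k+m)+1) :=
  tsum_nonneg fun k => term_nonneg (by norm_num) (by norm_num) x (k+m)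

lemma tail_bound (x : ℕ → Bool) (m : ℕ) :
    ∑' k : ℕ, (cond (x (k+m)) 2 0 : ℝ)/3^((k+m)+1) ≤ (1:ℝ) / 3 ^ m := by
  have h1 : Summable (fun k : ℕ => (cond (x (k+m)) 2 0 : ℝ)/3^((k+m)+1)) :=
    (summable_nat_add_iff (f := fun n => (cond (x n) 2 0 : ℝ)/3^(n+1)) m).2 (summable_wsum (c := 2) (b := 3) (by norm_num) (by norm_num) x)
  have h2 : Summable (fun k : ℕ => (2:ℝ)/3^((k+m)+1)) :=
    (summable_nat_add_iff (f := fun n => (2:ℝ)/3^(n+1)) m).2 (summable_bound (c := 2) (by norm_num))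
  refine le_trans (Summable.tsum_le_tsum (fun k => term_le (by norm_num) (by norm_num) x (k+m)) h1 h2) ?_
  have : ∀ k : ℕ, (2:ℝ)/3^((k+m)+1) = (2/3^(m+1)) * (1/3)^k := by
    intro k
    rw [div_pow, one_pow]
    rw [show k + m + 1 = (m+1) + k by ring, pow_add]
    field_simp
  have e1 : ∑' k : ℕ, (2:ℝ)/3^((k+m)+1) = 2/3^(m+1) * ∑' k : ℕ, ((1:ℝ)/3)^k := by
    rw [← tsum_mul_left]
    exact tsum_congr this
  rw [e1, tsum_geometric_of_lt_one (by norm_num) (by norm_num)]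
  apply le_of_eq
  have h3m : (0:ℝ) < 3^m := by positivity
  rw [pow_succ]
  field_simp
  ring

lemma wsum_lt (x y : ℕ → Bool) (n : ℕ) (hxn : x n = true) (hyn : y n = false)
    (hpre : ∀ k < n, x k = y k) : wsum 2 3 y < wsum 2 3 x := by
  have hsx := summable_wsum (c := 2) (b := 3) (by norm_num) (by norm_num) x
  have hsy := summable_wsum (c := 2) (b := 3) (by norm_num) (by norm_num) y
  have hx := Summable.sum_add_tsum_nat_add (f := fun n => (cond (x n) 2 0)/3^(n+1)) (n+1) hsx
  have hy := Summable.sum_add_tsum_nat_add (f := fun n => (cond (y n) 2 0)/3^(n+1)) (n+1) hsy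
  have hsum_eq : ∑ k ∈ Finset.range (n+1), (cond (x k) 2 0 : ℝ)/3^(k+1)
      = (∑ k ∈ Finset.range (n+1), (cond (y k) 2 0 : ℝ)/3^(k+1)) + 2/3^(n+1) := by
    rw [Finset.sum_range_succ, Finset.sum_range_succ, hxn, hyn]
    rw [Finset.sum_congr rfl (fun k hk => by rw [hpre k (Finset.mem_range.1 hk)])]
    simp
  have h1 := tail_nonneg x (n+1)
  have h2 := tail_bound y (n+1)
  have h3 : (1:ℝ)/3^(n+1) < 2/3^(n+1) := by
    have hp : (0:ℝ) < 3^(n+1) := by positivity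
    rw [div_lt_div_iff₀ hp hp]
    nlinarith
  beta_reduce at hx hy
  have hwx : wsum 2 3 x = ∑' k, (cond (x k) 2 0 : ℝ)/3^(k+1) := rfl
  have hwy : wsum 2 3 y = ∑' k, (cond (y k) 2 0 : ℝ)/3^(k+1) := rfl
  rw [hwy, ← hy, hwx, ← hx, hsum_eq]
  set S := ∑ k ∈ Finset.range (n+1), (cond (y k) 2 0 : ℝ)/3^(k+1) with hS
  set TX := ∑' k : ℕ, (cond (x (k+(n+1))) 2 0 : ℝ)/3^((k+(n+1))+1) with hTX
  set TY := ∑' k : ℕ, (cond (y (k+(n+1))) 2 0 : ℝ)/3^((k+(n+1))+1) with hTY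
  have h2' : TY ≤ 1/3^(n+1) := h2
  have h1' : (0:ℝ) ≤ TX := h1
  linarith

lemma wsum_injective : Injective (wsum 2 3) := by
  intro x y hxy
  by_contra hne
  have hd := PiNat.apply_firstDiff_ne hne
  have hpre := fun k (hk : k < PiNat.firstDiff x y) => PiNat.apply_eq_of_lt_firstDiff hk
  cases hx : x (PiNat.firstDiff x y) <;> cases hy : y (PiNat.firstDiff x y)
  · exact hd (hx.trans hy.symm)
  · exact absurd hxy (ne_of_lt (wsum_lt y x _ hy hx (fun k hk => (hpre k hk).symm)))
  · exact absurd hxy (ne_of_gt (wsum_lt x y _ hx hy hpre))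
  · exact hd (hx.trans hy.symm)


lemma wsum_bin_mem (ω : ℕ → Bool) : wsum 1 2 ω ∈ Icc (0:ℝ) 1 := by
  constructor
  · exact tsum_nonneg (term_nonneg (by norm_num) (by norm_num) ω)
  · have h1 := summable_wsum (c := 1) (b := 2) (by norm_num) (by norm_num) ω
    have h2 := summable_bound (c := 1) (b := 2) (by norm_num)
    refine le_trans (Summable.tsum_le_tsum (term_le (by norm_num) (by norm_num) ω) h1 h2) ?_
    have e : ∀ n : ℕ, (1:ℝ)/2^(n+1) = (1/2) * (1/2)^n := by
      intro n
      rw [div_pow, one_pow, pow_succ]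
      ring
    have e1 : ∑' n : ℕ, (1:ℝ)/2^(n+1) = (1/2) * ∑' n : ℕ, ((1:ℝ)/2)^n := by
      rw [← tsum_mul_left]
      exact tsum_congr e
    rw [e1, tsum_geometric_of_lt_one (by norm_num) (by norm_num)]
    norm_num

lemma wsum_bin_surj {x : ℝ} (hx : x ∈ Icc (0:ℝ) 1) : ∃ ω : ℕ → Bool, wsum 1 2 ω = x := by
  classical
  set t : ℕ → ℝ := fun n => Nat.rec x (fun _ s => if 1/2 ≤ s then 2*s-1 else 2*s) n with htdef
  have ht0 : t 0 = x := rfl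
  have htS : ∀ n, t (n+1) = if 1/2 ≤ t n then 2*t n - 1 else 2*t n := fun n => rfl
  set ω : ℕ → Bool := fun n => decide (1/2 ≤ t n) with hω
  have hinv : ∀ n, t n ∈ Icc (0:ℝ) 1 := by
    intro n
    induction n with
    | zero => exact hx
    | succ n ih =>
      rw [htS]
      rcases le_or_gt (1/2 : ℝ) (t n) with h | h
      · rw [if_pos h]
        constructor <;> [linarith [ih.1]; linarith [ih.2]]
      · rw [if_neg (not_le.2 h)]
        constructor <;> [linarith [ih.1]; linarith [ih.2]]
  have key : ∀ n, x = (∑ k ∈ Finset.range n, (cond (ω k) 1 0 : ℝ)/2^(k+1)) + t n / 2^n := by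
    intro n
    induction n with
    | zero => simp [ht0]
    | succ n ih =>
      rw [Finset.sum_range_succ]
      have step : t n / 2^n = (cond (ω n) 1 0 : ℝ)/2^(n+1) + t (n+1) / 2^(n+1) := by
        have h2n : (0:ℝ) < 2^n := by positivity
        rcases le_or_gt (1/2 : ℝ) (t n) with h | h
        · have : ω n = true := by simp [hω]; linarith
          rw [this, htS, if_pos h, pow_succ]
          field_simp
          simp only [cond_true]; ring
        · have : ω n = false := by simp [hω]; linarith
          rw [this, htS, if_neg (not_le.2 h), pow_succ]
          field_simp
          simp only [cond_false]; ring
      rw [ih, step]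
      ring
  refine ⟨ω, ?_⟩
  have hs := hasSum_wsum (c := 1) (b := 2) (by norm_num) (by norm_num) ω
  have hlim1 : Filter.Tendsto (fun n => ∑ k ∈ Finset.range n, (cond (ω k) 1 0 : ℝ)/2^(k+1))
      Filter.atTop (nhds (wsum 1 2 ω)) := hs.tendsto_sum_nat
  have hlim2 : Filter.Tendsto (fun n => ∑ k ∈ Finset.range n, (cond (ω k) 1 0 : ℝ)/2^(k+1))
      Filter.atTop (nhds x) := by
    have htail : Filter.Tendsto (fun n => t n / 2^n) Filter.atTop (nhds 0) := by
      apply squeeze_zero (fun n => div_nonneg (hinv n).1 (by positivity))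
        (fun n => by
          have h2n : (0:ℝ) < 2^n := by positivity
          calc t n / 2^n ≤ 1 / 2^n := by
                gcongr
                exact (hinv n).2
            _ = (1/2)^n := by rw [div_pow, one_pow])
      exact tendsto_pow_atTop_nhds_zero_of_lt_one (by norm_num) (by norm_num)
    have : (fun n => ∑ k ∈ Finset.range n, (cond (ω k) 1 0 : ℝ)/2^(k+1))
        = fun n => x - t n / 2^n := by
      funext n
      have := key n
      linarith
    rw [this]
    simpa using tendsto_const_nhds.sub htail
  exact tendsto_nhds_unique hlim1 hlim2


lemma range_wsum23 : range (wsum 2 3) = cantorC := by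
  ext x
  constructor
  · rintro ⟨ω, rfl⟩; exact wsum_mem_cantorC ω
  · intro hx; obtain ⟨ω, hω⟩ := cantorC_subset_range x hx; exact ⟨ω, hω⟩

lemma isCompact_cantorC : IsCompact cantorC := by
  rw [← range_wsum23]
  exact isCompact_range (continuous_wsum (by norm_num) (by norm_num))

noncomputable def triEquiv : (ℕ → Bool) ≃ cantorC :=
  Equiv.ofBijective (fun ω => (⟨wsum 2 3 ω, wsum_mem_cantorC ω⟩ : cantorC))
    ⟨fun a b hab => wsum_injective (congrArg Subtype.val hab),
     fun ⟨x, hx⟩ => by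
       obtain ⟨ω, hω⟩ := cantorC_subset_range x hx
       exact ⟨ω, Subtype.ext hω⟩⟩

noncomputable def triHomeo : (ℕ → Bool) ≃ₜ cantorC :=
  Continuous.homeoOfEquivCompactToT2
    (f := triEquiv)
    ((continuous_wsum (by norm_num) (by norm_num)).subtype_mk _)

lemma exists_bool_surj (X : Type*) [TopologicalSpace X] [CompactSpace X] [T2Space X]
    [SecondCountableTopology X] [Nonempty X] :
    ∃ F : (ℕ → Bool) → X, Continuous F ∧ Surjective F := by
  obtain ⟨e₀, he₀⟩ := TopologicalSpace.exists_embedding_l_infty X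
  set q : ℝ → ℝ := fun t => (((orderIsoIooNegOneOne ℝ).toHomeomorph t : ℝ) + 1)/2 with hq
  have hq_cont : Continuous q := ((continuous_subtype_val.comp
      (orderIsoIooNegOneOne ℝ).toHomeomorph.continuous).add continuous_const).div_const 2
  have hq_inj : Injective q := by
    intro a b hab
    have h2 : ((orderIsoIooNegOneOne ℝ) a : ℝ) = ((orderIsoIooNegOneOne ℝ) b : ℝ) := by
      have : ((((orderIsoIooNegOneOne ℝ) a : ℝ)) + 1)/2 = ((((orderIsoIooNegOneOne ℝ) b : ℝ)) + 1)/2 := hab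
      linarith [this]
    exact (orderIsoIooNegOneOne ℝ).injective (Subtype.ext h2)
  have hq_mem : ∀ t, q t ∈ Icc (0:ℝ) 1 := by
    intro t
    obtain ⟨h1, h2⟩ := ((orderIsoIooNegOneOne ℝ).toHomeomorph t).2
    constructor
    · show (0:ℝ) ≤ (_ + 1)/2
      linarith
    · show (_ + 1)/2 ≤ (1:ℝ)
      linarith
  set E : X → (ℕ → ℝ) := fun x n => q (e₀ x n) with hE
  have hE_cont : Continuous E := continuous_pi fun n =>
    hq_cont.comp ((BoundedContinuousFunction.lipschitz_eval_const n).continuous.comp he₀.continuous)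
  have hE_inj : Injective E := by
    intro a b hab
    apply he₀.injective
    ext n
    exact hq_inj (congrFun hab n)
  set p := Denumerable.eqv (ℕ × ℕ) with hp
  set G : (ℕ → Bool) → (ℕ → ℝ) := fun z n => wsum 1 2 (fun m => z (p (n, m))) with hG
  have hG_cont : Continuous G := continuous_pi fun n =>
    (continuous_wsum (by norm_num) (by norm_num)).comp (continuous_pi fun m => continuous_apply _)
  have hG_surj : ∀ f : ℕ → ℝ, (∀ n, f n ∈ Icc (0:ℝ) 1) → ∃ z, G z = f := by
    intro f hf
    choose g hg using fun n => wsum_bin_surj (hf n)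
    refine ⟨fun j => g (p.symm j).1 (p.symm j).2, ?_⟩
    funext n
    show wsum 1 2 (fun m => g (p.symm (p (n, m))).1 (p.symm (p (n, m))).2) = f n
    have he : (fun m => g (p.symm (p (n, m))).1 (p.symm (p (n, m))).2) = g n := by
      funext m; rw [Equiv.symm_apply_apply]
    rw [he]
    exact hg n
  have hEmb : IsClosedEmbedding E := hE_cont.isClosedEmbedding hE_inj
  have hKcl : IsClosed (G ⁻¹' (range E)) := hEmb.isClosed_range.preimage hG_cont
  have hKne : (G ⁻¹' (range E)).Nonempty := by
    obtain ⟨x⟩ := ‹Nonempty X›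
    obtain ⟨z, hz⟩ := hG_surj (E x) (fun n => hq_mem _)
    exact ⟨z, by rw [mem_preimage, hz]; exact mem_range_self x⟩
  obtain ⟨r, hr_id, hr_range, hr_cont⟩ := PiNat.exists_retraction_of_isClosed hKcl hKne
  set F : (ℕ → Bool) → X := fun z => Function.invFun E (G (r z)) with hF
  have hGr_mem : ∀ z, G (r z) ∈ range E := by
    intro z
    have : r z ∈ G ⁻¹' (range E) := by rw [← hr_range]; exact mem_range_self z
    exact this
  have hEF : ∀ z, E (F z) = G (r z) := fun z => Function.invFun_eq (hGr_mem z)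
  refine ⟨F, ?_, ?_⟩
  · rw [hEmb.isInducing.continuous_iff]
    have h3 : E ∘ F = G ∘ r := funext hEF
    rw [h3]
    exact hG_cont.comp hr_cont
  · intro x
    obtain ⟨z, hz⟩ := hG_surj (E x) (fun n => hq_mem _)
    have hzA : z ∈ G ⁻¹' (range E) := by rw [mem_preimage, hz]; exact mem_range_self x
    refine ⟨z, hE_inj ?_⟩
    rw [hEF z, hr_id z hzA, hz]


lemma secondCountable_of_image {C X : Type*} [TopologicalSpace C] [TopologicalSpace X]
    [CompactSpace C] [SecondCountableTopology C] [T2Space X] {f : C → X}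
    (hf : Continuous f) (hsurj : Function.Surjective f) : SecondCountableTopology X := by
  obtain ⟨B, hBc, -, hBb⟩ := TopologicalSpace.exists_countable_basis C
  let V : Set C → Set X := fun U => (f '' Uᶜ)ᶜ
  let 𝒰 : Set (Set C) := {U | ∃ T : Set (Set C), T ⊆ B ∧ T.Finite ∧ U = ⋃₀ T}
  have h𝒰c : 𝒰.Countable := by
    have h1 : {T : Set (Set C) | T.Finite ∧ T ⊆ B}.Countable := Set.countable_setOf_finite_subset hBc
    have h2 : 𝒰 ⊆ Set.sUnion '' {T : Set (Set C) | T.Finite ∧ T ⊆ B} := by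
      rintro U ⟨T, hTB, hTf, rfl⟩
      exact ⟨T, ⟨hTf, hTB⟩, rfl⟩
    exact (h1.image _).mono h2
  have h𝒰open : ∀ U ∈ 𝒰, IsOpen U := by
    rintro U ⟨T, hTB, -, rfl⟩
    exact isOpen_sUnion fun t ht => hBb.isOpen (hTB ht)
  have hbasis : TopologicalSpace.IsTopologicalBasis (V '' 𝒰) := by
    apply TopologicalSpace.isTopologicalBasis_of_isOpen_of_nhds
    · rintro v ⟨U, hU, rfl⟩
      have : IsCompact (f '' Uᶜ) := (((h𝒰open U hU).isClosed_compl).isCompact).image hf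
      exact this.isClosed.isOpen_compl
    · intro x W hxW hW
      have hS : IsCompact (f ⁻¹' {x}) := (isClosed_singleton.preimage hf).isCompact
      have hcov : f ⁻¹' {x} ⊆ ⋃ i : {U : Set C // U ∈ B ∧ U ⊆ f ⁻¹' W}, (i : Set C) := by
        intro c hc
        have hcW : c ∈ f ⁻¹' W := by
          simp only [Set.mem_preimage, Set.mem_singleton_iff] at hc
          simp [Set.mem_preimage, hc, hxW]
        obtain ⟨U, hUB, hcU, hUW⟩ :=
          hBb.exists_subset_of_mem_open hcW (hW.preimage hf)
        exact Set.mem_iUnion.2 ⟨⟨U, hUB, hUW⟩, hcU⟩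
      obtain ⟨t, ht⟩ := hS.elim_finite_subcover _
        (fun i : {U : Set C // U ∈ B ∧ U ⊆ f ⁻¹' W} => hBb.isOpen i.2.1) hcov
      set T : Set (Set C) := (fun i : {U : Set C // U ∈ B ∧ U ⊆ f ⁻¹' W} => (i : Set C)) '' t
        with hT
      have hU𝒰 : ⋃₀ T ∈ 𝒰 := ⟨T, by rintro u ⟨i, -, rfl⟩; exact i.2.1,
        (t.finite_toSet.image _), rfl⟩
      refine ⟨V (⋃₀ T), ⟨_, hU𝒰, rfl⟩, ?_, ?_⟩
      · intro hmem
        obtain ⟨c, hcU, hfc⟩ := hmem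
        apply hcU
        have hcS : c ∈ f ⁻¹' {x} := by simp [Set.mem_preimage, hfc]
        have := ht hcS
        simp only [Set.mem_iUnion] at this
        obtain ⟨i, hit, hci⟩ := this
        exact ⟨(i : Set C), ⟨i, hit, rfl⟩, hci⟩
      · intro y hy
        obtain ⟨c, rfl⟩ := hsurj y
        by_cases hcU : c ∈ ⋃₀ T
        · obtain ⟨u, ⟨i, -, rfl⟩, hcu⟩ := hcU
          exact i.2.2 hcu
        · exact absurd ⟨c, hcU, rfl⟩ hy
  exact hbasis.secondCountableTopology ((h𝒰c.image V).mono Set.Subset.rfl)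

lemma secondCountable_of_isEmpty {X : Type*} [TopologicalSpace X] [IsEmpty X] :
    SecondCountableTopology X := by
  refine ⟨⟨∅, Set.countable_empty, ?_⟩⟩
  refine TopologicalSpace.ext_iff.2 fun s => ?_
  have hs : s = Set.univ := Set.eq_univ_of_forall fun x => isEmptyElim x
  rw [hs]
  exact iff_of_true isOpen_univ (@isOpen_univ _ (TopologicalSpace.generateFrom ∅))

end CantorAux

theorem compact_t2_tfae {X : Type*} [TopologicalSpace X] [CompactSpace X] [T2Space X] :
    List.TFAE [TopologicalSpace.MetrizableSpace X,
      SecondCountableTopology X,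
      Nonempty X → ∃ f : cantorC → X, Continuous f ∧ Function.Surjective f] := by
  tfae_have 1 → 2
  | h => by
    haveI := h
    infer_instance
  tfae_have 2 → 1
  | h => by
    haveI := h
    infer_instance
  tfae_have 2 → 3
  | h => by
    haveI := h
    intro hne
    haveI := hne
    obtain ⟨F, hFc, hFs⟩ := CantorAux.exists_bool_surj X
    exact ⟨F ∘ CantorAux.triHomeo.symm, hFc.comp CantorAux.triHomeo.symm.continuous,
      hFs.comp CantorAux.triHomeo.symm.surjective⟩
  tfae_have 3 → 2
  | h => by
    rcases isEmpty_or_nonempty X with he | hne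
    · exact CantorAux.secondCountable_of_isEmpty
    · obtain ⟨f, hfc, hfs⟩ := h hne
      haveI : CompactSpace cantorC := isCompact_iff_compactSpace.mp CantorAux.isCompact_cantorC
      exact CantorAux.secondCountable_of_image hfc hfs
  tfae_finish
end
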